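/- arXiv:1204.4140 — 3 statements merged into one kernel-verified Lean document; each statement's English description precedes it below -/
import Mathlib

section
/- Let {X_t} be a finite irreducible reversible Markov chain on N with stationary distribution π and transition matrix P, and let P' be a transition matrix on the augmented space Ω = {(i,j) : P(i,j) > 0} satisfying: P'(e_ij, e_lk) = 0 whenever j ≠ l, and for all e_ij, e_jk ∈ Ω with i ≠ k, P(j,i)P'(e_ij,e_jk) = P(j,k)P'(e_kj,e_ji). Then the distribution π'(e_ij) = π(i)P(i,j) is stationary for P', i.e., ∑_{e_ij ∈ Ω} π'(e_ij) P'(e_ij, e_jk) = π'(e_jk) for every e_jk ∈ Ω. -/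
open Finset
open scoped Classical

private lemma pow_nn {N : Type*} [Fintype N] [DecidableEq N] (P : Matrix N N ℝ)
    (hPnn : ∀ i j, 0 ≤ P i j) : ∀ n i j, 0 ≤ (P ^ n) i j := by
  intro n
  induction n with
  | zero => intro i j; simp [Matrix.one_apply]; split <;> norm_num
  | succ n ih =>
    intro i j
    rw [pow_succ, Matrix.mul_apply]
    exact Finset.sum_nonneg fun l _ => mul_nonneg (ih i l) (hPnn l j)

private lemma stat_pow {N : Type*} [Fintype N] [DecidableEq N] (P : Matrix N N ℝ)
    (pr : N → ℝ) (hstat : ∀ j, ∑ i, pr i * P i j = pr j) :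
    ∀ n j, ∑ i, pr i * (P ^ n) i j = pr j := by
  intro n
  induction n with
  | zero => intro j; simp [Matrix.one_apply]
  | succ n ih =>
    intro j
    have : ∑ i, pr i * (P ^ (n+1)) i j
        = ∑ l, (∑ i, pr i * (P ^ n) i l) * P l j := by
      simp only [pow_succ, Matrix.mul_apply, Finset.mul_sum, Finset.sum_mul]
      rw [Finset.sum_comm]
      congr 1; ext l; congr 1; ext i; ring
    rw [this]
    simp only [ih]
    exact hstat j

/-- If `P'` on the augmented space `Ω = {(i,j) : P i j > 0}`
vanishes off chained pairs and satisfies Neal's balance condition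
`P(j,i)P'(e_ij,e_jk) = P(j,k)P'(e_kj,e_ji)`, then `π'(e_ij) = pr i * P i j`
is stationary for `P'`. -/
theorem neal_condition_stationary {N : Type*} [Fintype N] [DecidableEq N]
    (P : Matrix N N ℝ) (pr : N → ℝ)
    (hPnn : ∀ i j, 0 ≤ P i j) (hProw : ∀ i, ∑ j, P i j = 1)
    (hirr : ∀ i j, ∃ n : ℕ, 0 < (P ^ n) i j)
    (hprnn : ∀ i, 0 ≤ pr i) (hprsum : ∑ i, pr i = 1)
    (hstat : ∀ j, ∑ i, pr i * P i j = pr j)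
    (hrev : ∀ i j, pr i * P i j = pr j * P j i)
    (P' : N × N → N × N → ℝ)
    (hP'nn : ∀ e e', 0 ≤ P' e e')
    (hP'row : ∀ e : N × N, 0 < P e.1 e.2 →
      ∑ e' ∈ Finset.univ.filter (fun e' : N × N => 0 < P e'.1 e'.2), P' e e' = 1)
    (hchain : ∀ i j l k : N, j ≠ l → P' (i, j) (l, k) = 0)
    (hbal : ∀ i j k : N, 0 < P i j → 0 < P j k → i ≠ k →
      P j i * P' (i, j) (j, k) = P j k * P' (k, j) (j, i)) :
    ∀ j k : N, 0 < P j k →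
      ∑ e ∈ Finset.univ.filter (fun e : N × N => 0 < P e.1 e.2),
        (pr e.1 * P e.1 e.2) * P' e (j, k) = pr j * P j k := by
  -- π is positive
  have hprpos : ∀ i, 0 < pr i := by
    obtain ⟨i0, hi0⟩ : ∃ i0, 0 < pr i0 := by
      by_contra h
      push_neg at h
      have : ∀ i, pr i = 0 := fun i => le_antisymm (h i) (hprnn i)
      simp [this] at hprsum
    intro j
    obtain ⟨n, hn⟩ := hirr i0 j
    have := stat_pow P pr hstat n j
    have hle : pr i0 * (P ^ n) i0 j ≤ ∑ i, pr i * (P ^ n) i j :=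
      Finset.single_le_sum (f := fun i => pr i * (P ^ n) i j)
        (fun i _ => mul_nonneg (hprnn i) (pow_nn P hPnn n i j)) (Finset.mem_univ i0)
    have : 0 < pr j := lt_of_lt_of_le (mul_pos hi0 hn) (this ▸ hle)
    exact this
  have hsymm : ∀ i j : N, 0 < P i j → 0 < P j i := by
    intro i j h
    have := hrev i j
    by_contra hc
    push_neg at hc
    have : P j i = 0 := le_antisymm hc (hPnn j i)
    have h2 := hrev i j
    rw [this, mul_zero] at h2
    exact (mul_pos (hprpos i) h).ne' h2
  intro j k hjk
  -- reduce LHS to a sum over i with second coordinate j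
  have key : ∀ e ∈ Finset.univ.filter (fun e : N × N => 0 < P e.1 e.2),
      (pr e.1 * P e.1 e.2) * P' e (j, k)
        = (pr j * P j k) * (if 0 < P e.1 j ∧ e.2 = j then P' (k, j) (j, e.1) else 0) := by
    rintro ⟨i, j'⟩ he
    simp only [Finset.mem_filter] at he
    by_cases hjj : j' = j
    · subst hjj
      have hij : 0 < P i j' := he.2
      simp only [hij, and_self, if_true]
      have hrev' : pr i * P i j' = pr j' * P j' i := hrev i j'
      by_cases hik : i = k
      · rw [hik, hrev k j']
        try ring
      · have hb := hbal i j' k hij hjk hik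
        calc pr i * P i j' * P' (i, j') (j', k)
            = pr j' * (P j' i * P' (i, j') (j', k)) := by rw [hrev i j']; ring
          _ = pr j' * (P j' k * P' (k, j') (j', i)) := by rw [hb]
          _ = pr j' * P j' k * (P' (k, j') (j', i)) := by ring
    · rw [hchain i j' j k hjj]
      simp [hjj]
  rw [Finset.sum_congr rfl key, ← Finset.mul_sum]
  -- now show the remaining sum is 1
  have hkj : 0 < P k j := hsymm j k hjk
  have hrowsum := hP'row (k, j) hkj
  have hrow2 : ∑ e' ∈ Finset.univ.filter (fun e' : N × N => 0 < P e'.1 e'.2),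
      P' (k, j) e'
      = ∑ e' ∈ Finset.univ.filter (fun e' : N × N => 0 < P e'.1 e'.2),
        (if 0 < P e'.2 j ∧ e'.1 = j then P' (k, j) (j, e'.2) else 0) := by
    apply Finset.sum_congr rfl
    rintro ⟨l, m⟩ he
    simp only [Finset.mem_filter] at he
    by_cases hl : l = j
    · subst hl
      have : 0 < P m l := hsymm l m he.2
      simp [this]
    · rw [hchain k j l m (Ne.symm hl)]
      simp [hl]
  -- convert both sums over the prod filter to sums over full univ then match
  have hA : ∑ e ∈ Finset.univ.filter (fun e : N × N => 0 < P e.1 e.2),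
      (if 0 < P e.1 j ∧ e.2 = j then P' (k, j) (j, e.1) else 0)
      = ∑ i, if 0 < P i j then P' (k, j) (j, i) else 0 := by
    rw [Finset.sum_filter, Fintype.sum_prod_type]
    apply Finset.sum_congr rfl
    intro i _
    rw [Fintype.sum_eq_single j (fun m hm => by simp [hm])]
    by_cases h : 0 < P i j <;> simp [h]
  have hB : ∑ e' ∈ Finset.univ.filter (fun e' : N × N => 0 < P e'.1 e'.2),
      (if 0 < P e'.2 j ∧ e'.1 = j then P' (k, j) (j, e'.2) else 0)
      = ∑ i, if 0 < P i j then P' (k, j) (j, i) else 0 := by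
    rw [Finset.sum_filter, Fintype.sum_prod_type]
    rw [Fintype.sum_eq_single j (fun l hl => by
      apply Finset.sum_eq_zero; intro m _; simp [hl])]
    apply Finset.sum_congr rfl
    intro m _
    by_cases h : 0 < P m j
    · have h2 : 0 < P j m := hsymm m j h
      simp [h, h2]
    · have h2 : ¬ 0 < P j m := fun hh => h (hsymm j m hh)
      simp [h, h2]
  rw [hA, ← hB, ← hrow2, hrowsum, mul_one]
end

section
/- With notation as in the MHDA construction: let P̃ be the embedded chain of a reversible MH chain P with stationary distribution π̃ on N, and define on Ω the transition probabilities P̃'(e_ij,e_jk) = P̃(j,k) + P̃(j,i)Q'(e_ij,e_jk)A'(e_ij,e_jk) for i ≠ k, where A'(e_ij,e_jk) = min{1, P²(j,k)Q'(e_kj,e_ji)/(P²(j,i)Q'(e_ij,e_jk))}. Then for all e_ij, e_jk ∈ Ω with i ≠ k, the balance condition π̃'(e_ij)P̃'(e_ij,e_jk) = π̃'(e_kj)P̃'(e_kj,e_ji) holds, where π̃'(e_ij) = π̃(i)P̃(i,j). -/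
open Finset
open scoped Classical

/-- With `P̃` the embedded chain of a reversible MH chain `P`
(stationary distribution `pr`, `π̃ ∝ pr·γ`), `π̃'(e_ij) = π̃(i)P̃(i,j)`, and MHDA
transition probabilities
`P̃'(e_ij,e_jk) = P̃(j,k) + P̃(j,i)Q'(e_ij,e_jk)A'(e_ij,e_jk)` with
`A'(e_ij,e_jk) = min{1, P(j,k)²Q'(e_kj,e_ji)/(P(j,i)²Q'(e_ij,e_jk))}`, the
balance condition `π̃'(e_ij)P̃'(e_ij,e_jk) = π̃'(e_kj)P̃'(e_kj,e_ji)` holds for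
all `e_ij, e_jk ∈ Ω` with `i ≠ k`. -/
theorem mhda_balance {N : Type*} [Fintype N] [DecidableEq N]
    (P : Matrix N N ℝ) (pr : N → ℝ)
    (hPnn : ∀ i j, 0 ≤ P i j) (hProw : ∀ i, ∑ j, P i j = 1)
    (hirr : ∀ i j, ∃ n : ℕ, 0 < (P ^ n) i j)
    (hprpos : ∀ i, 0 < pr i) (hprsum : ∑ i, pr i = 1)
    (hrev : ∀ i j, pr i * P i j = pr j * P j i)
    (hdiag : ∀ i, P i i < 1)
    (γ : N → ℝ) (hγ : ∀ i, γ i = 1 - P i i)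
    (Pt : N → N → ℝ)
    (hPtoff : ∀ i j, i ≠ j → Pt i j = P i j / γ i)
    (hPtdiag : ∀ i, Pt i i = 0)
    (prt : N → ℝ)
    (hprt : ∀ i, prt i = pr i * γ i / ∑ k, pr k * γ k)
    (Q' : N × N → N × N → ℝ)
    (hQ'nn : ∀ e e', 0 ≤ Q' e e')
    (hQ'row : ∀ e : N × N, 0 < Pt e.1 e.2 →
      ∑ e' ∈ Finset.univ.filter (fun e' : N × N => 0 < Pt e'.1 e'.2), Q' e e' = 1)
    (hQ'chain : ∀ i j l k : N, j ≠ l → Q' (i, j) (l, k) = 0)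
    (hQ'sym : ∀ i j k : N, 0 < Q' (i, j) (j, k) ↔ 0 < Q' (k, j) (j, i))
    (A' : N × N → N × N → ℝ)
    (hA' : ∀ i j k : N, A' (i, j) (j, k)
      = min 1 ((P j k)^2 * Q' (k, j) (j, i) / ((P j i)^2 * Q' (i, j) (j, k))))
    (Pt' : N × N → N × N → ℝ)
    (hPt' : ∀ i j k : N, i ≠ k →
      Pt' (i, j) (j, k) = Pt j k + Pt j i * Q' (i, j) (j, k) * A' (i, j) (j, k)) :
    ∀ i j k : N, 0 < Pt i j → 0 < Pt j k → i ≠ k →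
      0 < Q' (i, j) (j, k) → 0 < Q' (k, j) (j, i) →
      (prt i * Pt i j) * Pt' (i, j) (j, k)
        = (prt k * Pt k j) * Pt' (k, j) (j, i) := by
  intro i j k hPtij hPtjk hik hQ1 hQ2
  have hij : i ≠ j := by rintro rfl; rw [hPtdiag] at hPtij; exact lt_irrefl 0 hPtij
  have hjk : j ≠ k := by rintro rfl; rw [hPtdiag] at hPtjk; exact lt_irrefl 0 hPtjk
  have hγi : 0 < γ i := by rw [hγ]; linarith [hdiag i]
  have hγj : 0 < γ j := by rw [hγ]; linarith [hdiag j]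
  have hγk : 0 < γ k := by rw [hγ]; linarith [hdiag k]
  have hPij : 0 < P i j := by
    have h1 : P i j = Pt i j * γ i := by rw [hPtoff i j hij]; field_simp
    rw [h1]; exact mul_pos hPtij hγi
  have hPjk : 0 < P j k := by
    have h1 : P j k = Pt j k * γ j := by rw [hPtoff j k hjk]; field_simp
    rw [h1]; exact mul_pos hPtjk hγj
  have hPji : 0 < P j i := by nlinarith [hrev i j, mul_pos (hprpos i) hPij, hprpos j]
  have hPkj : 0 < P k j := by nlinarith [hrev j k, mul_pos (hprpos j) hPjk, hprpos k]
  have hZ : 0 < ∑ l, pr l * γ l :=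
    Finset.sum_pos (fun l _ => mul_pos (hprpos l) (by rw [hγ]; linarith [hdiag l]))
      ⟨i, Finset.mem_univ i⟩
  rw [hPt' i j k hik, hPt' k j i hik.symm, hA' i j k, hA' k j i, hprt i, hprt k,
    hPtoff i j hij, hPtoff k j hjk.symm, hPtoff j k hjk, hPtoff j i hij.symm]
  have ha : 0 < (P j i)^2 * Q' (i,j) (j,k) := mul_pos (pow_pos hPji 2) hQ1
  have hb : 0 < (P j k)^2 * Q' (k,j) (j,i) := mul_pos (pow_pos hPjk 2) hQ2
  set a := (P j i)^2 * Q' (i,j) (j,k) with hadef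
  set b := (P j k)^2 * Q' (k,j) (j,i) with hbdef
  set m1 := min 1 (b / a) with hm1
  set m2 := min 1 (a / b) with hm2
  have key : a * m1 = b * m2 := by
    rw [hm1, hm2, mul_min_of_nonneg _ _ ha.le, mul_min_of_nonneg _ _ hb.le, mul_one, mul_one,
      mul_div_cancel₀ _ ha.ne', mul_div_cancel₀ _ hb.ne', min_comm]
  have hri := hrev i j
  have hrk := hrev k j
  rw [hadef, hbdef] at key
  field_simp
  linear_combination (1 : ℝ) *
    ((P j k + P j i * Q' (i, j) (j, k) * m1) * hri
      - (P j i + P j k * Q' (k, j) (j, i) * m2) * hrk + pr j * key)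
end

section
/- Equality of mean sojourn rates under MHDA and MH: let π̃' (e_ij) = π̃(i)P̃(i,j) on Ω and γ'(e_ij) = γ(j), where π̃(i) ∝ π(i)γ(i) and P̃ is the embedded chain of a reversible chain P with stationary distribution π. Define λ(e_ij) ∝ π̃'(e_ij)/γ'(e_ij). Then E_λ(γ') = E_π(γ), i.e., ∑_{e_ij∈Ω} γ'(e_ij)λ(e_ij) = ∑_i γ(i)π(i). -/
open Finset
open scoped Classical

/-- Equality of mean sojourn rates under MHDA and MH: with
`π̃'(e_ij) = π̃(i)P̃(i,j)`, `γ'(e_ij) = γ(j)`, and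
`λ(e_ij) ∝ π̃'(e_ij)/γ'(e_ij)` on `Ω = {(i,j) : P̃(i,j) > 0}`, one has
`E_λ(γ') = E_π(γ)`, i.e. `∑_{e_ij∈Ω} γ(j) λ(e_ij) = ∑_i γ(i)π(i)`. -/
theorem mean_sojourn_rate_equality {N : Type*} [Fintype N] [DecidableEq N]
    (P : Matrix N N ℝ) (pr : N → ℝ)
    (hPnn : ∀ i j, 0 ≤ P i j) (hProw : ∀ i, ∑ j, P i j = 1)
    (hirr : ∀ i j, ∃ n : ℕ, 0 < (P ^ n) i j)
    (hprpos : ∀ i, 0 < pr i) (hprsum : ∑ i, pr i = 1)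
    (hrev : ∀ i j, pr i * P i j = pr j * P j i)
    (γ : N → ℝ) (hγdef : ∀ i, γ i = 1 - P i i)
    (hγ : ∀ i, 0 < γ i ∧ γ i ≤ 1)
    (prt : N → ℝ)
    (hprt : ∀ i, prt i = pr i * γ i / ∑ k, pr k * γ k)
    (Pt : N → N → ℝ)
    (hPtoff : ∀ i j, i ≠ j → Pt i j = P i j / γ i)
    (hPtdiag : ∀ i, Pt i i = 0)
    (lam : N × N → ℝ)
    (hlam : ∀ e : N × N, lam e = (prt e.1 * Pt e.1 e.2 / γ e.2)
      / ∑ e' ∈ Finset.univ.filter (fun e' : N × N => 0 < Pt e'.1 e'.2),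
          prt e'.1 * Pt e'.1 e'.2 / γ e'.2) :
    ∑ e ∈ Finset.univ.filter (fun e : N × N => 0 < Pt e.1 e.2),
        γ e.2 * lam e
      = ∑ i, γ i * pr i := by
  have hγpos : ∀ i, 0 < γ i := fun i => (hγ i).1
  have hne : (Finset.univ : Finset N).Nonempty := by
    rcases (Finset.univ : Finset N).eq_empty_or_nonempty with h | h
    · rw [h] at hprsum; simp at hprsum
    · exact h
  set S := ∑ k, pr k * γ k with hS
  have hSpos : 0 < S :=
    Finset.sum_pos (fun k _ => mul_pos (hprpos k) (hγpos k)) hne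
  -- Pt is nonnegative
  have hPtnn : ∀ i j, 0 ≤ Pt i j := by
    intro i j
    by_cases h : i = j
    · subst h; rw [hPtdiag]
    · rw [hPtoff i j h]; exact div_nonneg (hPnn i j) (hγpos i).le
  -- row sums of Pt are 1
  have hPtrow : ∀ i, ∑ j, Pt i j = 1 := by
    intro i
    have h1 : ∑ j, Pt i j = ∑ j ∈ Finset.univ.erase i, P i j / γ i := by
      rw [← Finset.sum_erase _ (by simp [hPtdiag] : Pt i i = 0)]
      exact Finset.sum_congr rfl fun j hj =>
        hPtoff i j (Ne.symm (Finset.ne_of_mem_erase hj))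
    have h2 : ∑ j ∈ Finset.univ.erase i, P i j = 1 - P i i := by
      have h3 := Finset.add_sum_erase Finset.univ (P i) (Finset.mem_univ i)
      have h4 := hProw i
      linarith
    rw [h1, ← Finset.sum_div, h2, ← hγdef i, div_self (hγpos i).ne']
  -- key symmetric identity
  have hkey : ∀ i j, prt i * Pt i j / γ j = pr j * Pt j i / S := by
    intro i j
    by_cases h : i = j
    · subst h; simp [hPtdiag]
    · rw [hPtoff i j h, hPtoff j i (Ne.symm h), hprt i]
      have h1 := hrev i j
      field_simp [(hγpos i).ne', (hγpos j).ne', hSpos.ne']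
      linear_combination h1
  -- the denominator equals 1/S
  have hΩfull : ∀ f : N × N → ℝ, (∀ e : N × N, Pt e.1 e.2 = 0 → f e = 0) →
      ∑ e ∈ Finset.univ.filter (fun e : N × N => 0 < Pt e.1 e.2), f e
        = ∑ e : N × N, f e := by
    intro f hf
    rw [Finset.sum_filter]
    refine Finset.sum_congr rfl fun e _ => ?_
    split_ifs with h
    · rfl
    · exact (hf e (le_antisymm (not_lt.mp h) (hPtnn e.1 e.2))).symm
  have hD : ∑ e' ∈ Finset.univ.filter (fun e' : N × N => 0 < Pt e'.1 e'.2),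
      prt e'.1 * Pt e'.1 e'.2 / γ e'.2 = 1 / S := by
    rw [hΩfull _ (by intro e he; rw [he]; ring)]
    rw [Fintype.sum_prod_type]
    have : ∀ i j : N, prt i * Pt i j / γ j = pr j * Pt j i / S := hkey
    calc ∑ i, ∑ j, prt i * Pt i j / γ j
        = ∑ i, ∑ j, pr j * Pt j i / S := by
          exact Finset.sum_congr rfl fun i _ =>
            Finset.sum_congr rfl fun j _ => hkey i j
      _ = ∑ j, ∑ i, pr j * Pt j i / S := Finset.sum_comm
      _ = ∑ j, pr j / S := by
          refine Finset.sum_congr rfl fun j _ => ?_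
          rw [← Finset.sum_div, ← Finset.mul_sum, hPtrow j, mul_one]
      _ = 1 / S := by rw [← Finset.sum_div, hprsum]
  -- sum of prt is 1
  have hprtsum : ∑ i, prt i = 1 := by
    calc ∑ i, prt i = ∑ i, pr i * γ i / S := Finset.sum_congr rfl fun i _ => hprt i
      _ = S / S := by rw [← Finset.sum_div]
      _ = 1 := div_self hSpos.ne'
  -- main computation
  calc ∑ e ∈ Finset.univ.filter (fun e : N × N => 0 < Pt e.1 e.2), γ e.2 * lam e
      = ∑ e ∈ Finset.univ.filter (fun e : N × N => 0 < Pt e.1 e.2),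
          prt e.1 * Pt e.1 e.2 / (1 / S) := by
        refine Finset.sum_congr rfl fun e _ => ?_
        rw [hlam e, hD]
        field_simp
        rw [mul_assoc]; exact mul_div_cancel_left₀ _ (hγpos e.2).ne'
    _ = (∑ e ∈ Finset.univ.filter (fun e : N × N => 0 < Pt e.1 e.2),
          prt e.1 * Pt e.1 e.2) / (1 / S) := by rw [Finset.sum_div]
    _ = (∑ e : N × N, prt e.1 * Pt e.1 e.2) / (1 / S) := by
        rw [hΩfull _ (by intro e he; rw [he]; ring)]
    _ = 1 / (1 / S) := by
        congr 1
        rw [Fintype.sum_prod_type]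
        calc ∑ i, ∑ j, prt i * Pt i j
            = ∑ i, prt i := by
              refine Finset.sum_congr rfl fun i _ => ?_
              rw [← Finset.mul_sum, hPtrow i, mul_one]
          _ = 1 := hprtsum
    _ = S := by rw [one_div_one_div]
    _ = ∑ i, γ i * pr i := Finset.sum_congr rfl fun i _ => mul_comm _ _
end
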